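/- Let H be a complex Hilbert space, A a bounded normal operator on H, and G a nonempty countable set of vectors in H. If the family (A^n g), indexed by pairs (g,n) ∈ G × ℕ, is complete in H, then it is not minimal; that is, there exists a pair (g₀,n₀) ∈ G × ℕ such that A^{n₀} g₀ belongs to the closed linear span of { A^n g : (g,n) ∈ G × ℕ, (g,n) ≠ (g₀,n₀) }. -/

import Mathlib

open ContinuousLinearMap
open scoped InnerProductSpace

/-- For a normal operator, `ker A† ⊆ ker A` (pointwise form). -/
lemma aux_ker {H : Type*} [NormedAddCommGroup H] [InnerProductSpace ℂ H] [CompleteSpace H]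
    (A : H →L[ℂ] H) (hA : adjoint A ∘L A = A ∘L adjoint A)
    (z : H) (hz : adjoint A z = 0) : A z = 0 := by
  have h0 : adjoint A (A z) = A (adjoint A z) := by
    rw [← comp_apply, ← comp_apply, hA]
  have : ⟪A z, A z⟫_ℂ = 0 := by
    rw [← adjoint_inner_left, h0, hz, map_zero, inner_zero_left]
  exact inner_self_eq_zero.mp this

/-- If `A` is a bounded normal operator on a complex Hilbert space `H` and `G` is
a nonempty countable set of vectors such that the system `{A^n g : g ∈ G, n ∈ ℕ}` is
complete in `H`, then this system is not minimal. -/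
theorem stmt_0 {H : Type*} [NormedAddCommGroup H] [InnerProductSpace ℂ H] [CompleteSpace H]
    (A : H →L[ℂ] H) (hA : adjoint A ∘L A = A ∘L adjoint A)
    (G : Set H) (hG : G.Countable) (hGne : G.Nonempty)
    (hcomplete :
      (Submodule.span ℂ
        (Set.range fun p : ↥G × ℕ => (A ^ p.2) (p.1 : H))).topologicalClosure = ⊤) :
    ∃ p₀ : ↥G × ℕ, (A ^ p₀.2) (p₀.1 : H) ∈
      (Submodule.span ℂ
        ((fun p : ↥G × ℕ => (A ^ p.2) (p.1 : H)) '' {p | p ≠ p₀})).topologicalClosure := by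
  by_contra hmin
  push_neg at hmin
  obtain ⟨g, hg⟩ := hGne
  set p₀ : ↥G × ℕ := (⟨g, hg⟩, 1) with hp₀
  set K := (Submodule.span ℂ
      ((fun p : ↥G × ℕ => (A ^ p.2) (p.1 : H)) '' {p | p ≠ p₀})).topologicalClosure with hK
  have hnot : (A ^ p₀.2) (p₀.1 : H) ∉ K := hmin p₀
  -- find w ∈ Kᗮ not orthogonal to A g
  have hcc : Kᗮᗮ = K := Submodule.orthogonal_orthogonal K
  have hex : ¬ ∀ u ∈ Kᗮ, ⟪u, (A ^ p₀.2) (p₀.1 : H)⟫_ℂ = 0 := by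
    intro hall
    exact hnot (hcc ▸ (Submodule.mem_orthogonal Kᗮ _).mpr hall)
  push_neg at hex
  obtain ⟨w, hwK, hw⟩ := hex
  -- w is orthogonal to all A^m g' with index ≠ p₀
  have claim1 : ∀ p : ↥G × ℕ, p ≠ p₀ → ⟪(A ^ p.2) (p.1 : H), w⟫_ℂ = 0 := by
    intro p hp
    have hmem : (A ^ p.2) (p.1 : H) ∈ K :=
      Submodule.le_topologicalClosure _ (Submodule.subset_span ⟨p, hp, rfl⟩)
    exact (Submodule.mem_orthogonal K w).mp hwK _ hmem
  -- (A†)² w is orthogonal to the whole system, hence zero by completeness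
  have claim2 : adjoint A (adjoint A w) = 0 := by
    set v := adjoint A (adjoint A w) with hv
    have horthS : ∀ p : ↥G × ℕ, ⟪(A ^ p.2) (p.1 : H), v⟫_ℂ = 0 := by
      intro p
      have hcalc : ⟪(A ^ p.2) (p.1 : H), v⟫_ℂ = ⟪(A ^ (p.2 + 2)) (p.1 : H), w⟫_ℂ := by
        rw [hv, adjoint_inner_right, adjoint_inner_right]
        congr 1
        have h2 : A ^ (p.2 + 2) = A * (A * A ^ p.2) := by
          rw [show p.2 + 2 = p.2 + 1 + 1 from rfl, pow_succ', pow_succ']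
        rw [h2, mul_apply_eq_comp, mul_apply_eq_comp]
      rw [hcalc]
      exact claim1 (p.1, p.2 + 2) (by simp [hp₀])
    have hmemorth : v ∈ (Submodule.span ℂ
        (Set.range fun p : ↥G × ℕ => (A ^ p.2) (p.1 : H)))ᗮ := by
      rw [Submodule.mem_orthogonal]
      intro u hu
      have hle : Submodule.span ℂ (Set.range fun p : ↥G × ℕ => (A ^ p.2) (p.1 : H)) ≤
          (ℂ ∙ v)ᗮ := by
        rw [Submodule.span_le]
        rintro x ⟨p, rfl⟩
        exact Submodule.mem_orthogonal_singleton_iff_inner_left.mpr (horthS p)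
      exact Submodule.mem_orthogonal_singleton_iff_inner_left.mp (hle hu)
    rw [Submodule.topologicalClosure_eq_top_iff.mp hcomplete] at hmemorth
    simpa using hmemorth
  -- hence A† w = 0 by normality
  have h3 : A (adjoint A w) = 0 := aux_ker A hA _ claim2
  have h4 : adjoint A w = 0 := by
    have : ⟪adjoint A w, adjoint A w⟫_ℂ = 0 := by
      rw [adjoint_inner_left, h3, inner_zero_right]
    exact inner_self_eq_zero.mp this
  -- contradiction with ⟪w, A g⟫ ≠ 0
  apply hw
  have h5 : ⟪w, (A ^ p₀.2) (p₀.1 : H)⟫_ℂ = ⟪adjoint A w, (p₀.1 : H)⟫_ℂ := by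
    rw [show p₀.2 = 1 from rfl, pow_one, ← adjoint_inner_left]
  rw [h5, h4, inner_zero_left]
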